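/- (Norm asymptotics of the quasi-mode as b → 0⁺) Let m ≥ 1 be an integer, ν ∈ (−1/2, 1/2], and set a = m − ν. With χ(r) = 1 + ((a − b/2)/(a + b/2))·r^{−2a} and f(r) = r^{a}·e^{−b·r²/4}, there exist constants C > 0 and b₀ > 0 such that for all 0 < b < b₀: | ∫₁^∞ χ(r)²·f(r)²·r dr − 2^{a}·Γ(a+1)·b^{−(a+1)} | ≤ C/b, where Γ denotes the Gamma function. -/

import Mathlib

open MeasureTheory Real Set

lemma aux_main (a b : ℝ) (ha : 0 < a) (hb : 0 < b) :
    ∫ x in Ioi (0:ℝ), x ^ (2*a+1) * Real.exp (-(b/2) * x^2)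
      = 2 ^ a * Real.Gamma (a+1) * b ^ (-(a+1)) := by
  have hk : (0:ℝ) < b/2 := by linarith
  have h := integral_rpow_mul_exp_neg_mul_rpow (p := 2) (q := 2*a+1) (b := b/2)
    (by norm_num) (by linarith) hk
  simp_rw [rpow_two] at h
  rw [h]
  have h1 : (-(2*a+1+1)/2 : ℝ) = -(a+1) := by ring
  have h2 : ((2*a+1+1)/2 : ℝ) = a+1 := by ring
  rw [h1, h2]
  have h3 : ((b/2:ℝ)) ^ (-(a+1)) = b ^ (-(a+1)) * (2:ℝ) ^ (a+1) := by
    rw [div_eq_mul_inv, Real.mul_rpow hb.le (by norm_num), ← Real.rpow_neg_one (2:ℝ),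
      ← Real.rpow_mul (by norm_num : (0:ℝ) ≤ 2)]
    norm_num
  rw [h3, Real.rpow_add (by norm_num : (0:ℝ) < 2) a 1, Real.rpow_one]
  ring

lemma aux_lin (b : ℝ) (hb : 0 < b) :
    ∫ x in Ioi (0:ℝ), x * Real.exp (-(b/2) * x^2) = 1/b := by
  have hk : (0:ℝ) < b/2 := by linarith
  have h := integral_rpow_mul_exp_neg_mul_rpow (p := 2) (q := 1) (b := b/2)
    (by norm_num) (by norm_num) hk
  simp_rw [rpow_two, Real.rpow_one] at h
  rw [h]
  norm_num
  rw [Real.rpow_neg_one]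
  field_simp

/-- Norm asymptotics of the quasi-mode as `b → 0⁺`: with `a = m − ν`, `m ≥ 1`,
`‖Ψ‖² = ∫₁^∞ χ(r)² f(r)² r dr = 2^a Γ(a+1) b^{−(a+1)} + O(1/b)`. -/
theorem quasi_mode_norm_asymptotics
    (m : ℤ) (hm : 1 ≤ m) (ν : ℝ) (hν : ν ∈ Set.Ioc (-(1:ℝ)/2) (1/2))
    (a : ℝ) (ha : a = (m : ℝ) - ν) :
    ∃ C > (0:ℝ), ∃ b₀ > (0:ℝ), ∀ b : ℝ, 0 < b → b < b₀ →
      |(∫ r in Set.Ioi (1:ℝ),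
          (1 + (a - b / 2) / (a + b / 2) * r ^ (-(2 * a))) ^ 2 *
            (r ^ a * Real.exp (-b * r ^ 2 / 4)) ^ 2 * r)
        - (2:ℝ) ^ a * Real.Gamma (a + 1) * b ^ (-(a + 1))| ≤ C / b := by
  have ham : (1:ℝ) ≤ (m:ℝ) := by exact_mod_cast hm
  have ha2 : (1:ℝ)/2 ≤ a := by
    obtain ⟨hν1, hν2⟩ := hν
    rw [ha]; linarith
  have ha0 : (0:ℝ) < a := by linarith
  refine ⟨4, by norm_num, min 1 a, by positivity, fun b hb hbb => ?_⟩
  have hb1 : b < 1 := lt_of_lt_of_le hbb (min_le_left _ _)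
  have hba : b < a := lt_of_lt_of_le hbb (min_le_right _ _)
  have hk : (0:ℝ) < b/2 := by linarith
  set c : ℝ := (a - b / 2) / (a + b / 2) with hc
  have hden : (0:ℝ) < a + b/2 := by linarith
  have hc0 : 0 ≤ c := div_nonneg (by linarith) hden.le
  have hc1 : c ≤ 1 := (div_le_one hden).2 (by linarith)
  set g₁ : ℝ → ℝ := fun r => r ^ (2*a+1) * Real.exp (-(b/2) * r^2) with hg₁
  set g₂ : ℝ → ℝ := fun r => r * Real.exp (-(b/2) * r^2) with hg₂
  set g₃ : ℝ → ℝ := fun r => r ^ (-(2*a)) * (r * Real.exp (-(b/2) * r^2)) with hg₃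
  have hint1 : IntegrableOn g₁ (Ioi (0:ℝ)) :=
    integrableOn_rpow_mul_exp_neg_mul_sq hk (by linarith)
  have hint2 : IntegrableOn g₂ (Ioi (0:ℝ)) := by
    have := integrableOn_rpow_mul_exp_neg_mul_sq (s := 1) hk (by norm_num)
    simpa only [Real.rpow_one] using this
  have hsub : Ioi (1:ℝ) ⊆ Ioi (0:ℝ) := Ioi_subset_Ioi zero_le_one
  have hint1' : IntegrableOn g₁ (Ioi (1:ℝ)) := hint1.mono_set hsub
  have hint2' : IntegrableOn g₂ (Ioi (1:ℝ)) := hint2.mono_set hsub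
  have hg2nn : ∀ r : ℝ, 0 < r → 0 ≤ g₂ r := fun r hr => by
    have := Real.exp_pos (-(b/2) * r^2); rw [hg₂]; positivity
  have hg3le : ∀ r : ℝ, 1 < r → g₃ r ≤ g₂ r := by
    intro r hr
    have hu : r ^ (-(2*a)) ≤ 1 :=
      Real.rpow_le_one_of_one_le_of_nonpos hr.le (by linarith)
    have h2 : 0 ≤ g₂ r := hg2nn r (by linarith)
    calc g₃ r = r ^ (-(2*a)) * g₂ r := rfl
      _ ≤ 1 * g₂ r := mul_le_mul_of_nonneg_right hu h2
      _ = g₂ r := one_mul _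
  have hg3nn : ∀ r : ℝ, 1 < r → 0 ≤ g₃ r := by
    intro r hr
    have hr0 : (0:ℝ) < r := by linarith
    have := Real.exp_pos (-(b/2) * r^2)
    rw [hg₃]; positivity
  have hint3 : IntegrableOn g₃ (Ioi (1:ℝ)) := by
    refine Integrable.mono' hint2' ?_ ?_
    · rw [hg₃]
      exact Measurable.aestronglyMeasurable (by fun_prop)
    · filter_upwards [ae_restrict_mem measurableSet_Ioi] with r hr
      rw [Real.norm_eq_abs, abs_of_nonneg (hg3nn r hr)]
      exact hg3le r hr
  -- rewrite the integrand
  have hcong : (∫ r in Set.Ioi (1:ℝ),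
      (1 + (a - b / 2) / (a + b / 2) * r ^ (-(2 * a))) ^ 2 *
        (r ^ a * Real.exp (-b * r ^ 2 / 4)) ^ 2 * r)
      = ∫ r in Set.Ioi (1:ℝ), (g₁ r + (2*c*g₂ r + c^2 * g₃ r)) := by
    refine setIntegral_congr_fun measurableSet_Ioi (fun r hr => ?_)
    have hr1 : (1:ℝ) < r := hr
    have hr0 : (0:ℝ) < r := by linarith
    have e1 : Real.exp (-b*r^2/4) ^ 2 = Real.exp (-(b/2)*r^2) := by
      rw [sq, ← Real.exp_add]; congr 1; ring
    have e2 : (r ^ a)^2 = r ^ (2*a) := by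
      rw [sq, ← Real.rpow_add hr0, two_mul]
    have e3 : r ^ (-(2*a)) * r ^ (2*a) = 1 := by
      rw [← Real.rpow_add hr0]; simp
    have e4 : r ^ (2*a+1) = r ^ (2*a) * r := by
      rw [Real.rpow_add hr0, Real.rpow_one]
    rw [← hc]
    simp only [hg₁, hg₂, hg₃, mul_pow, e1, e2, e4]
    linear_combination (2*c + c^2 * r ^ (-(2*a))) * r * Real.exp (-(b/2)*r^2) * e3
  have hintS : IntegrableOn (fun r => 2*c*g₂ r + c^2*g₃ r) (Ioi (1:ℝ)) :=
    (hint2'.const_mul (2*c)).add (hint3.const_mul (c^2))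
  rw [hcong, integral_add hint1' hintS,
    integral_add (hint2'.const_mul (2*c)) (hint3.const_mul (c^2)),
    integral_const_mul, integral_const_mul]
  set I₁ := ∫ r in Ioi (1:ℝ), g₁ r
  set I₂ := ∫ r in Ioi (1:ℝ), g₂ r
  set I₃ := ∫ r in Ioi (1:ℝ), g₃ r
  set M := (2:ℝ) ^ a * Real.Gamma (a + 1) * b ^ (-(a + 1)) with hM
  -- bound |I₁ - M| ≤ 1
  have hsplit : ∫ r in Ioi (0:ℝ), g₁ r = (∫ r in Ioc (0:ℝ) 1, g₁ r) + I₁ := by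
    rw [← setIntegral_union (Ioc_disjoint_Ioi le_rfl) measurableSet_Ioi
      (hint1.mono_set Ioc_subset_Ioi_self) hint1', Ioc_union_Ioi_eq_Ioi zero_le_one]
  have hMain : ∫ r in Ioi (0:ℝ), g₁ r = M := aux_main a b ha0 hb
  have hsmall : |∫ r in Ioc (0:ℝ) 1, g₁ r| ≤ 1 := by
    have h := norm_setIntegral_le_of_norm_le_const (μ := volume) (s := Ioc (0:ℝ) 1)
      (f := g₁) (C := 1) (by rw [Real.volume_Ioc]; exact ENNReal.ofReal_lt_top)
      ?_
    · rw [Real.norm_eq_abs] at h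
      simpa [Real.volume_real_Ioc] using h
    · intro r hr
      have hr0 : (0:ℝ) < r := hr.1
      have h1 : r ^ (2*a+1) ≤ 1 := Real.rpow_le_one hr0.le hr.2 (by linarith)
      have h2 : Real.exp (-(b/2) * r^2) ≤ 1 := by
        rw [Real.exp_le_one_iff]
        have : (0:ℝ) ≤ r^2 := sq_nonneg r
        nlinarith
      have h3 : (0:ℝ) ≤ g₁ r := by
        have := (Real.exp_pos (-(b/2) * r^2)).le
        rw [hg₁]; positivity
      rw [Real.norm_eq_abs, abs_of_nonneg h3]
      have h4 : (0:ℝ) ≤ r ^ (2*a+1) := Real.rpow_nonneg hr0.le _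
      calc g₁ r = r ^ (2*a+1) * Real.exp (-(b/2) * r^2) := rfl
        _ ≤ 1 * 1 := mul_le_mul h1 h2 (Real.exp_pos _).le zero_le_one
        _ = 1 := one_mul _
  have hI1 : |I₁ - M| ≤ 1 := by
    have : I₁ - M = -(∫ r in Ioc (0:ℝ) 1, g₁ r) := by
      rw [← hMain, hsplit]; ring
    rw [this, abs_neg]; exact hsmall
  -- bounds on I₂, I₃
  have hI2nn : 0 ≤ I₂ := setIntegral_nonneg measurableSet_Ioi
    (fun r hr => hg2nn r (by exact lt_trans zero_lt_one hr))
  have hI2le : I₂ ≤ 1/b := by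
    have h := setIntegral_mono_set hint2
      (by filter_upwards [ae_restrict_mem measurableSet_Ioi] with r hr
          exact hg2nn r hr)
      (HasSubset.Subset.eventuallyLE hsub)
    calc I₂ ≤ ∫ r in Ioi (0:ℝ), g₂ r := h
      _ = 1/b := aux_lin b hb
  have hI3nn : 0 ≤ I₃ := setIntegral_nonneg measurableSet_Ioi (fun r hr => hg3nn r hr)
  have hI3le : I₃ ≤ I₂ := setIntegral_mono_on hint3 hint2' measurableSet_Ioi
    (fun r hr => hg3le r hr)
  -- finish
  have h2cI : 0 ≤ 2*c*I₂ := by positivity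
  have h3cI : 0 ≤ c^2*I₃ := mul_nonneg (sq_nonneg c) hI3nn
  have hnn : 0 ≤ 2*c*I₂ + c^2*I₃ := add_nonneg h2cI h3cI
  have key : |I₁ + (2*c*I₂ + c^2*I₃) - M| ≤ |I₁ - M| + (2*c*I₂ + c^2*I₃) := by
    have h1 : I₁ + (2*c*I₂ + c^2*I₃) - M = (I₁ - M) + (2*c*I₂ + c^2*I₃) := by ring
    rw [h1]
    calc |(I₁ - M) + (2*c*I₂ + c^2*I₃)| ≤ |I₁ - M| + |2*c*I₂ + c^2*I₃| := abs_add_le _ _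
      _ = |I₁ - M| + (2*c*I₂ + c^2*I₃) := by rw [abs_of_nonneg hnn]
  have h1b : (1:ℝ) ≤ 1/b := by rw [le_div_iff₀ hb]; linarith
  have hcc : c^2 ≤ 1 := by
    calc c^2 = c*c := sq c
      _ ≤ 1*1 := mul_le_mul hc1 hc1 hc0 zero_le_one
      _ = 1 := one_mul 1
  have h2c : c*I₂ ≤ 1*(1/b) := mul_le_mul hc1 hI2le hI2nn zero_le_one
  have hbound2 : 2*c*I₂ ≤ 2*(1/b) := by linarith
  have hbound3 : c^2*I₃ ≤ 1/b := by
    calc c^2*I₃ ≤ 1*I₃ := mul_le_mul_of_nonneg_right hcc hI3nn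
      _ = I₃ := one_mul _
      _ ≤ I₂ := hI3le
      _ ≤ 1/b := hI2le
  have h4b : (4:ℝ)/b = 4*(1/b) := by ring
  calc |I₁ + (2*c*I₂ + c^2*I₃) - M| ≤ |I₁ - M| + (2*c*I₂ + c^2*I₃) := key
    _ ≤ 1 + (2*(1/b) + 1/b) := by linarith
    _ ≤ 4/b := by rw [h4b]; linarith
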